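/- Suppose Σ_{n=0}^∞ 1/a_n < ∞ (with a_n > 0), the sequence (a_n/√(a_{n−1}a_{n+1}) − 1) is absolutely summable, and (b_n/√(a_{n−1}a_n)) is bounded with absolutely summable differences. Then (√(a_{n+1}/a_n)) is bounded with absolutely summable differences, lim_n a_{n−1}/a_n =: r exists with r ∈ (0,1], lim_n b_n/a_n =: s exists, and if q := lim_n b_n/(2√(a_{n−1}a_n)) then s = 2q√r; consequently discr of the limit transfer matrix B = [[0,1],[−r,−s]] equals s² − 4r = 4r(q−1)(q+1), which is nonzero whenever |q| ≠ 1. -/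

import Mathlib

open Filter

private lemma abs_log_le_two_mul (x : ℝ) (hx : 1/2 ≤ x) : |Real.log x| ≤ 2 * |x - 1| := by
  have hx0 : 0 < x := by linarith
  have h1 : Real.log x ≤ x - 1 := Real.log_le_sub_one_of_pos hx0
  have h2 : Real.log x⁻¹ ≤ x⁻¹ - 1 := Real.log_le_sub_one_of_pos (by positivity)
  rw [Real.log_inv] at h2
  have h3 : 1 - x ≤ |x - 1| := by rw [abs_sub_comm]; exact le_abs_self _
  have h4 : x - 1 ≤ |x - 1| := le_abs_self _
  have h5 : x⁻¹ - 1 ≤ 2 * |x - 1| := by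
    rw [inv_eq_one_div, div_sub' hx0.ne', div_le_iff₀ hx0]
    nlinarith [abs_nonneg (x - 1)]
  rw [abs_le]
  constructor <;> linarith

/-- Yafaev-type regularity: limits of the transfer-matrix data in the non-Carleman case. -/
theorem yafaev_class_limits
    (a : ℕ → ℝ) (b : ℕ → ℝ) (hapos : ∀ n, 0 < a n)
    (hnotCarleman : Summable (fun n => 1 / a n))
    (hratio : Summable (fun n => |a (n + 1) / Real.sqrt (a n * a (n + 2)) - 1|))
    (hbbdd : ∃ C : ℝ, ∀ n, |b (n + 1) / Real.sqrt (a n * a (n + 1))| ≤ C)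
    (hbdiff : Summable (fun n =>
      |b (n + 2) / Real.sqrt (a (n + 1) * a (n + 2)) -
        b (n + 1) / Real.sqrt (a n * a (n + 1))|)) :
    ((∃ C : ℝ, ∀ n, Real.sqrt (a (n + 1) / a n) ≤ C) ∧
      Summable (fun n =>
        |Real.sqrt (a (n + 2) / a (n + 1)) - Real.sqrt (a (n + 1) / a n)|)) ∧
    ∃ r s : ℝ, 0 < r ∧ r ≤ 1 ∧
      Tendsto (fun n => a n / a (n + 1)) atTop (nhds r) ∧
      Tendsto (fun n => b (n + 1) / a (n + 1)) atTop (nhds s) ∧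
      ∀ q : ℝ,
        Tendsto (fun n => b (n + 1) / (2 * Real.sqrt (a n * a (n + 1)))) atTop (nhds q) →
          s = 2 * q * Real.sqrt r ∧
          s ^ 2 - 4 * r = 4 * r * (q - 1) * (q + 1) ∧
          (|q| ≠ 1 → s ^ 2 - 4 * r ≠ 0) := by
  classical
  set c : ℕ → ℝ := fun n => Real.sqrt (a (n + 1) / a n) with hc_def
  set d : ℕ → ℝ := fun n => b (n + 1) / Real.sqrt (a n * a (n + 1)) with hd_def
  set x : ℕ → ℝ := fun n => a (n + 1) / Real.sqrt (a n * a (n + 2)) with hx_def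
  have hsp : ∀ n, 0 < Real.sqrt (a n) := fun n => Real.sqrt_pos.2 (hapos n)
  have hms : ∀ n, Real.sqrt (a n) * Real.sqrt (a n) = a n :=
    fun n => Real.mul_self_sqrt (hapos n).le
  have hc_eq : ∀ n, c n = Real.sqrt (a (n + 1)) / Real.sqrt (a n) := fun n =>
    Real.sqrt_div (hapos (n + 1)).le _
  have hcpos : ∀ n, 0 < c n := fun n => by rw [hc_eq]; exact div_pos (hsp _) (hsp _)
  have hx_eq : ∀ n, x n = c n / c (n + 1) := by
    intro n
    rw [hc_eq, hc_eq]
    show a (n + 1) / Real.sqrt (a n * a (n + 2)) = _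
    rw [Real.sqrt_mul (hapos n).le]
    rw [div_div_div_comm]
    rw [← hms (n + 1)]
    field_simp
    rw [Real.sqrt_sq (hsp _).le]
  have hxpos : ∀ n, 0 < x n := fun n => by rw [hx_eq]; exact div_pos (hcpos _) (hcpos _)
  have hratio' : Summable (fun n => |x n - 1|) := hratio
  -- x tends to 1
  have hx1 : Tendsto x atTop (nhds 1) := by
    have h0 : Tendsto (fun n => x n - 1) atTop (nhds 0) :=
      (tendsto_zero_iff_abs_tendsto_zero _).2 hratio'.tendsto_atTop_zero
    have := h0.add_const 1
    simpa using this
  have hxhalf : ∀ᶠ n in atTop, 1/2 ≤ x n :=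
    hx1.eventually (eventually_ge_nhds (by norm_num))
  -- summability of |log x n|
  have hlog_sum : Summable (fun n => |Real.log (x n)|) := by
    apply Summable.of_norm_bounded_eventually (g := fun n => 2 * |x n - 1|) (hratio'.mul_left 2)
    rw [Nat.cofinite_eq_atTop]
    filter_upwards [hxhalf] with n hn
    simpa [Real.norm_eq_abs, abs_abs] using abs_log_le_two_mul _ hn
  -- log c is Cauchy hence convergent
  have hLc : CauchySeq (fun n => Real.log (c n)) := by
    apply cauchySeq_of_summable_dist
    refine Summable.of_nonneg_of_le (fun n => dist_nonneg) (fun n => ?_) hlog_sum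
    rw [Real.dist_eq]
    have h : Real.log (c n) - Real.log (c (n + 1)) = Real.log (x n) := by
      rw [hx_eq n, Real.log_div (hcpos n).ne' (hcpos (n + 1)).ne']
    rw [h]
  obtain ⟨l, hl⟩ := cauchySeq_tendsto_of_complete hLc
  have hclim : Tendsto c atTop (nhds (Real.exp l)) := by
    have h := (Real.continuous_exp.tendsto l).comp hl
    exact h.congr fun n => Real.exp_log (hcpos n)
  set cl := Real.exp l with hcl_def
  have hcl0 : 0 < cl := Real.exp_pos l
  have hc2 : ∀ n, c n ^ 2 = a (n + 1) / a n := fun n =>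
    Real.sq_sqrt (div_pos (hapos _) (hapos _)).le
  -- a tends to infinity
  have hatop : Tendsto a atTop atTop := by
    have h2 : Tendsto (fun n => 1 / a n) atTop (nhdsWithin 0 (Set.Ioi 0)) := by
      rw [tendsto_nhdsWithin_iff]
      exact ⟨hnotCarleman.tendsto_atTop_zero,
        Eventually.of_forall fun n => Set.mem_Ioi.2 (by have := hapos n; positivity)⟩
    have h3 := h2.inv_tendsto_nhdsGT_zero
    exact h3.congr fun n => by simp
  -- cl ≥ 1
  have hcl1 : 1 ≤ cl := by
    by_contra hlt
    push_neg at hlt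
    have hcl2 : cl ^ 2 < 1 := by nlinarith
    have h2 : Tendsto (fun n => c n ^ 2) atTop (nhds (cl ^ 2)) := hclim.pow 2
    have hev : ∀ᶠ n in atTop, c n ^ 2 < 1 := h2.eventually (eventually_lt_nhds hcl2)
    obtain ⟨N, hN⟩ := eventually_atTop.1 hev
    have hdec : ∀ k, a (N + k) ≤ a N := by
      intro k
      induction k with
      | zero => simp
      | succ k ih =>
        have h' := hN (N + k) (Nat.le_add_right _ _)
        rw [hc2, div_lt_one (hapos (N + k))] at h'
        have : N + (k + 1) = (N + k) + 1 := by omega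
        rw [this]
        exact le_trans h'.le ih
    obtain ⟨M, hM⟩ := eventually_atTop.1 (tendsto_atTop.1 hatop (a N + 1))
    have h1 := hM (max M N) (le_max_left _ _)
    have h2' := hdec (max M N - N)
    have : N + (max M N - N) = max M N := by omega
    rw [this] at h2'
    linarith
  -- limit of d
  have hd_sum : Summable (fun n => |d (n + 1) - d n|) := hbdiff
  have hdC : CauchySeq d := by
    apply cauchySeq_of_summable_dist
    refine hd_sum.congr fun n => ?_
    rw [Real.dist_eq, abs_sub_comm]
  obtain ⟨dl, hdl⟩ := cauchySeq_tendsto_of_complete hdC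
  -- b(n+1)/a(n+1) = d n / c n
  have hd_eq : ∀ n, d n / c n = b (n + 1) / a (n + 1) := by
    intro n
    rw [hc_eq]
    show b (n + 1) / Real.sqrt (a n * a (n + 1)) / _ = _
    rw [Real.sqrt_mul (hapos n).le, ← hms (n + 1)]
    have h1 := (hsp n).ne'
    have h2 := (hsp (n + 1)).ne'
    field_simp
    rw [Real.sqrt_sq (hsp _).le]
  refine ⟨⟨?_, ?_⟩, (cl ^ 2)⁻¹, dl / cl, by positivity, ?_, ?_, ?_, ?_⟩
  · -- boundedness of c
    have hb : BddAbove (Set.range c) := hclim.bddAbove_range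
    obtain ⟨C, hC⟩ := hb
    exact ⟨C, fun n => hC (Set.mem_range_self n)⟩
  · -- summability of |c (n+1) - c n|
    obtain ⟨C, hC⟩ : ∃ C : ℝ, ∀ n, c n ≤ C := by
      obtain ⟨C, hC⟩ := hclim.bddAbove_range
      exact ⟨C, fun n => hC (Set.mem_range_self n)⟩
    have key : ∀ n, |c (n + 1) - c n| ≤ C * |x n - 1| := by
      intro n
      have h2 : c (n + 1) - c n = c (n + 1) * (1 - x n) := by
        rw [hx_eq n, mul_sub, mul_one, mul_comm (c (n + 1)),
          div_mul_cancel₀ _ (hcpos (n + 1)).ne']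
      rw [h2, abs_mul, abs_of_pos (hcpos (n + 1)), abs_sub_comm]
      exact mul_le_mul_of_nonneg_right (hC (n + 1)) (abs_nonneg _)
    refine Summable.of_nonneg_of_le (fun n => abs_nonneg _) key (hratio'.mul_left C)
  · -- r ≤ 1
    rw [inv_le_one_iff₀]
    right
    nlinarith
  · -- a n / a (n+1) → (cl^2)⁻¹
    have h := (hclim.pow 2).inv₀ (by positivity)
    refine h.congr fun n => ?_
    rw [hc2, inv_div]
  · -- b(n+1)/a(n+1) → dl/cl
    exact (hdl.div hclim hcl0.ne').congr hd_eq
  · intro q hq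
    have hq' : Tendsto (fun n => d n / 2) atTop (nhds q) := by
      refine hq.congr fun n => ?_
      show b (n + 1) / (2 * Real.sqrt (a n * a (n + 1))) = _
      rw [div_div, mul_comm]
    have hdl2 : dl / 2 = q := tendsto_nhds_unique (hdl.div_const 2) hq'
    have hdl_eq : dl = 2 * q := by linarith [hdl2]
    have hsr : Real.sqrt ((cl ^ 2)⁻¹) = cl⁻¹ := by
      rw [Real.sqrt_inv, Real.sqrt_sq hcl0.le]
    have hs_eq : dl / cl = 2 * q * Real.sqrt ((cl ^ 2)⁻¹) := by
      rw [hsr, hdl_eq]; field_simp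
    refine ⟨hs_eq, ?_, ?_⟩
    · rw [hs_eq, hsr]
      field_simp
      ring
    · intro hq1
      rw [hs_eq, hsr]
      have hkey : (2 * q * cl⁻¹) ^ 2 - 4 * (cl ^ 2)⁻¹ = 4 * (cl ^ 2)⁻¹ * (q - 1) * (q + 1) := by
        field_simp
        ring
      rw [hkey]
      refine mul_ne_zero (mul_ne_zero (by positivity) ?_) ?_
      · intro h
        apply hq1
        have : q = 1 := by linarith [sub_eq_zero.1 h]
        rw [this, abs_one]
      · intro h
        apply hq1
        have : q = -1 := by linarith [eq_neg_of_add_eq_zero_left h]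
        rw [this, abs_neg, abs_one]
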